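/- Let X be a 2-divisible abelian group and B a subgroup of ℚ contained in ℤ[1/2], and let g : X → B be a surjective homomorphism. Then g admits a section: there is a homomorphism s : B → X with g ∘ s = id. -/

import Mathlib

noncomputable section

/-- The subgroup `ℤ[1/p] ⊆ ℚ` of fractions with denominator a power of `p`. -/
def zOneDiv (p : ℕ) : AddSubgroup ℚ :=
  AddSubgroup.closure {q : ℚ | ∃ n : ℕ, q = 1 / (p : ℚ) ^ n}

lemma mem_zOneDiv_two {q : ℚ} (hq : q ∈ zOneDiv 2) : ∃ a : ℤ, ∃ n : ℕ, q = a / 2 ^ n := by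
  let S : AddSubgroup ℚ :=
    { carrier := {q : ℚ | ∃ a : ℤ, ∃ n : ℕ, q = a / 2 ^ n}
      zero_mem' := ⟨0, 0, by norm_num⟩
      add_mem' := by
        rintro x y ⟨a, n, rfl⟩ ⟨b, m, rfl⟩
        refine ⟨a * 2 ^ m + b * 2 ^ n, n + m, ?_⟩
        have h1 : ((2 : ℚ)) ^ n ≠ 0 := pow_ne_zero _ two_ne_zero
        have h2 : ((2 : ℚ)) ^ m ≠ 0 := pow_ne_zero _ two_ne_zero
        rw [div_add_div _ _ h1 h2]
        push_cast
        rw [pow_add]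
        ring_nf
      neg_mem' := by
        rintro x ⟨a, n, rfl⟩
        exact ⟨-a, n, by push_cast; ring⟩ }
  have : zOneDiv 2 ≤ S := by
    apply AddSubgroup.closure_le _ |>.mpr
    rintro x ⟨n, rfl⟩
    exact ⟨1, n, by norm_num⟩
  exact this hq

/-- If `X` is a `2`-divisible abelian group, `B` is a subgroup of `ℚ` contained in the
dyadic rationals `ℤ[1/2]`, and `g : X → B` is a surjective homomorphism, then `g` admits
a section. -/
theorem stmt9 {X : Type} [AddCommGroup X] (hX : ∀ x : X, ∃ x', x' + x' = x)
    (B : AddSubgroup ℚ) (hB : B ≤ zOneDiv 2)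
    (g : X →+ ↥B) (hg : Function.Surjective g) :
    ∃ s : ↥B →+ X, g.comp s = AddMonoidHom.id ↥B := by
  classical
  -- `B ∩ ℤ` is cyclic, generated by `d`
  obtain ⟨d, hd⟩ := Int.subgroup_cyclic (B.comap (Int.castAddHom ℚ))
  have hdB : (d : ℚ) ∈ B := by
    have : d ∈ B.comap (Int.castAddHom ℚ) := by
      rw [hd]; exact AddSubgroup.subset_closure rfl
    exact this
  -- every element of `B` has the form `a * d / 2 ^ n`
  have hrep : ∀ b : ℚ, b ∈ B → ∃ a : ℤ, ∃ n : ℕ, b = a * d / 2 ^ n := by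
    intro b hb
    obtain ⟨c, n, hc⟩ := mem_zOneDiv_two (hB hb)
    have hcB : (c : ℚ) ∈ B := by
      have h2 : ((2 : ℚ) ^ n) * b ∈ B := by
        have := AddSubgroup.nsmul_mem B hb (2 ^ n)
        simpa [nsmul_eq_mul] using this
      have : ((2 : ℚ) ^ n) * b = c := by
        rw [hc]; field_simp
      rwa [this] at h2
    have : c ∈ B.comap (Int.castAddHom ℚ) := hcB
    rw [hd, AddSubgroup.mem_closure_singleton] at this
    obtain ⟨a, ha⟩ := this
    refine ⟨a, n, ?_⟩
    rw [hc]
    congr 1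
    exact_mod_cast (congrArg (Int.cast : ℤ → ℚ) ha).symm
  have hrep' : ∀ b : ↥B, ∃ p : ℤ × ℕ, (b : ℚ) = p.1 * d / 2 ^ p.2 := by
    intro b
    obtain ⟨a, n, h⟩ := hrep b b.2
    exact ⟨(a, n), h⟩
  by_cases hd0 : (d : ℚ) = 0
  · -- then B is trivial
    refine ⟨0, ?_⟩
    ext b
    obtain ⟨⟨a, n⟩, h⟩ := hrep' b
    have hb0 : b = 0 := by
      apply Subtype.ext
      simp only [h, hd0, mul_zero, zero_div, AddSubgroup.coe_zero]
    simp [hb0]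
  · -- construct compatible halvings `c n` of a preimage of `d`
    set c : ℕ → X := fun n => Nat.rec (Classical.choose (hg ⟨d, hdB⟩))
      (fun _ x => Classical.choose (hX x)) n with hc
    have hc0 : g (c 0) = ⟨d, hdB⟩ := Classical.choose_spec (hg ⟨d, hdB⟩)
    have hcs : ∀ n, c (n + 1) + c (n + 1) = c n := fun n => Classical.choose_spec (hX (c n))
    have hgc : ∀ n, ((g (c n) : ℚ)) = d / 2 ^ n := by
      intro n
      induction n with
      | zero => rw [hc0]; norm_num
      | succ n ih =>
        have h1 : g (c (n + 1)) + g (c (n + 1)) = g (c n) := by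
          rw [← map_add, hcs]
        have h2 : ((g (c (n + 1)) : ℚ)) + ((g (c (n + 1)) : ℚ)) = d / 2 ^ n := by
          rw [← ih, ← AddSubgroup.coe_add, h1]
        have h3 : (2 : ℚ) ^ (n + 1) = 2 ^ n * 2 := by ring
        rw [h3]
        rw [div_mul_eq_div_div]
        linarith
    have hcm : ∀ n k : ℕ, c n = (2 ^ k : ℤ) • c (n + k) := by
      intro n k
      induction k with
      | zero => simp
      | succ k ih =>
        rw [ih]
        have : c (n + k) = (2 : ℤ) • c (n + (k + 1)) := by
          rw [two_smul]
          exact (hcs (n + k)).symm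
        rw [this, smul_smul]
        ring_nf
    -- well-definedness
    have hwd0 : ∀ (a₁ a₂ : ℤ) (n₁ n₂ : ℕ), n₁ ≤ n₂ →
        ((a₁ : ℚ) * d / 2 ^ n₁ = a₂ * d / 2 ^ n₂) → a₁ • c n₁ = a₂ • c n₂ := by
      intro a₁ a₂ n₁ n₂ hle heq
      obtain ⟨k, rfl⟩ := Nat.exists_eq_add_of_le hle
      have h1 : (a₁ : ℚ) * 2 ^ k = a₂ := by
        have h2 : ((2 : ℚ)) ^ n₁ ≠ 0 := pow_ne_zero _ two_ne_zero
        have h3 : ((2 : ℚ)) ^ (n₁ + k) ≠ 0 := pow_ne_zero _ two_ne_zero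
        field_simp at heq
        have h4 : (a₁ : ℚ) * d * 2 ^ (n₁ + k) = a₂ * d * 2 ^ n₁ := by
          linear_combination (d : ℚ) * heq
        have h5 : (a₁ : ℚ) * 2 ^ (n₁ + k) = a₂ * 2 ^ n₁ := by
          have := mul_right_cancel₀ hd0 (by linarith [h4] : (a₁ : ℚ) * 2 ^ (n₁ + k) * d = a₂ * 2 ^ n₁ * d)
          exact this
        rw [pow_add] at h5
        have := mul_right_cancel₀ h2 (by linarith [h5] : (a₁ : ℚ) * 2 ^ k * 2 ^ n₁ = a₂ * 2 ^ n₁)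
        exact this
      have h1' : a₁ * 2 ^ k = a₂ := by exact_mod_cast h1
      rw [hcm n₁ k, smul_smul, h1']
    have hwd : ∀ (a₁ a₂ : ℤ) (n₁ n₂ : ℕ),
        ((a₁ : ℚ) * d / 2 ^ n₁ = a₂ * d / 2 ^ n₂) → a₁ • c n₁ = a₂ • c n₂ := by
      intro a₁ a₂ n₁ n₂ heq
      rcases le_total n₁ n₂ with h | h
      · exact hwd0 a₁ a₂ n₁ n₂ h heq
      · exact (hwd0 a₂ a₁ n₂ n₁ h heq.symm).symm
    -- the section
    set F : ↥B → X := fun b => (Classical.choose (hrep' b)).1 • c (Classical.choose (hrep' b)).2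
      with hF
    have hFspec : ∀ (b : ↥B) (a : ℤ) (n : ℕ), (b : ℚ) = a * d / 2 ^ n → F b = a • c n := by
      intro b a n h
      apply hwd
      rw [← Classical.choose_spec (hrep' b), h]
    refine ⟨{ toFun := F
              map_zero' := by
                have := hFspec 0 0 0 (by norm_num)
                simpa using this
              map_add' := ?_ }, ?_⟩
    · intro b₁ b₂
      show F (b₁ + b₂) = F b₁ + F b₂
      obtain ⟨⟨a₁, n₁⟩, h₁⟩ := hrep' b₁
      obtain ⟨⟨a₂, n₂⟩, h₂⟩ := hrep' b₂
      have h2n : ∀ m : ℕ, ((2 : ℚ)) ^ m ≠ 0 := fun m => pow_ne_zero _ two_ne_zero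
      have hsum : ((b₁ + b₂ : ↥B) : ℚ) =
          ((a₁ * 2 ^ n₂ + a₂ * 2 ^ n₁ : ℤ) : ℚ) * d / 2 ^ (n₁ + n₂) := by
        rw [AddSubgroup.coe_add, h₁, h₂]
        push_cast
        field_simp
        ring
      rw [hFspec _ _ _ hsum, hFspec _ _ _ h₁, hFspec _ _ _ h₂]
      have e₁ : a₁ • c n₁ = (a₁ * 2 ^ n₂) • c (n₁ + n₂) := by
        apply hwd
        push_cast
        field_simp
        ring
      have e₂ : a₂ • c n₂ = (a₂ * 2 ^ n₁) • c (n₁ + n₂) := by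
        apply hwd
        push_cast
        field_simp
        ring
      rw [e₁, e₂, add_smul]
    · ext b
      obtain ⟨⟨a, n⟩, h⟩ := hrep' b
      simp only [AddMonoidHom.coe_comp, AddMonoidHom.coe_mk, ZeroHom.coe_mk,
        Function.comp_apply, AddMonoidHom.id_apply]
      rw [hFspec b a n h, map_zsmul]
      have hco : ((a • g (c n) : ↥B) : ℚ) = a • ((g (c n) : ℚ)) := rfl
      rw [hco, hgc n, h, zsmul_eq_mul]
      push_cast
      ring
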